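/- Under the i.i.d. sampling assumption and the feasibility assumption μ_τ({1,…,k}) > 1−α, the probability that Algorithm 1 fails to return a parameter set tends to zero: lim_{n→∞} P( J^{(n)} = NA ) = 0; equivalently, the probability that |⋃_{j∈{1,…,k}} S_j^{(n)}| < (1−α)n tends to 0 as n → ∞. -/

import Mathlib

open MeasureTheory ProbabilityTheory Filter
open scoped Classical

/-- A binary mask on a `W × H` grid: `true` encodes the value 1. -/
abbrev Mask (W H : ℕ) := Fin W × Fin H → Bool

/-- Intersection-over-Union of two binary masks, with the convention
`IoU A B = 1` when the union is empty. -/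
noncomputable def IoU {W H : ℕ} (A B : Mask W H) : ℝ :=
  if (Finset.univ.filter (fun p : Fin W × Fin H => A p = true ∨ B p = true)).card = 0 then 1
  else ((Finset.univ.filter (fun p : Fin W × Fin H => A p = true ∧ B p = true)).card : ℝ) /
    ((Finset.univ.filter (fun p : Fin W × Fin H => A p = true ∨ B p = true)).card : ℝ)

variable {𝒳 : Type*} [MeasurableSpace 𝒳] {W H k : ℕ}

/-- `μ_τ(J)`: the probability under the law `P` that some parameter index `j ∈ J`
produces a mask with `IoU` exceeding `τ` against the true mask. -/
noncomputable def muTau (P : Measure (𝒳 × Mask W H)) (f : 𝒳 → Fin k → Mask W H)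
    (τ : ℝ) (J : Finset (Fin k)) : ENNReal :=
  P {p | ∃ j ∈ J, τ < IoU p.2 (f p.1 j)}

/-- `Covers Z f α τ n ω J` says that the parameter set `J` covers at least a
`(1−α)` fraction of the first `n` calibration samples `Z 1 ω, …, Z n ω`:
`|⋃_{j ∈ J} S_j^{(n)}| ≥ (1−α)·n`. -/
def Covers (Z : ℕ → Ω → 𝒳 × Mask W H) (f : 𝒳 → Fin k → Mask W H) (α τ : ℝ)
    (n : ℕ) (ω : Ω) (J : Finset (Fin k)) : Prop :=
  (1 - α) * n ≤ (((Finset.Icc 1 n).filter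
    (fun i => ∃ j ∈ J, τ < IoU (Z i ω).2 (f (Z i ω).1 j))).card : ℝ)

/-- On a finite set, any strict total order has a least element. -/
lemma exists_lt_least {β : Type*} (lt : β → β → Prop) (h : IsStrictTotalOrder β lt)
    (s : Finset β) (hs : s.Nonempty) : ∃ J ∈ s, ∀ J' ∈ s, J = J' ∨ lt J J' := by
  classical
  haveI := h
  induction s using Finset.induction_on with
  | empty => exact absurd hs (by simp)
  | @insert a s' ha ih =>
    rcases s'.eq_empty_or_nonempty with rfl | hs'
    · exact ⟨a, by simp, by simp⟩
    · obtain ⟨J, hJs, hJ⟩ := ih hs'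
      rcases trichotomous_of lt a J with hlt | heq | hgt
      · refine ⟨a, Finset.mem_insert_self a s', fun J' hJ' => ?_⟩
        rcases Finset.mem_insert.1 hJ' with rfl | hJ's
        · exact Or.inl rfl
        · rcases hJ J' hJ's with rfl | h2
          · exact Or.inr hlt
          · exact Or.inr (Trans.trans hlt h2)
      · refine ⟨J, Finset.mem_insert_of_mem hJs, fun J' hJ' => ?_⟩
        rcases Finset.mem_insert.1 hJ' with rfl | hJ's
        · exact Or.inl heq.symm
        · exact hJ J' hJ's
      · refine ⟨J, Finset.mem_insert_of_mem hJs, fun J' hJ' => ?_⟩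
        rcases Finset.mem_insert.1 hJ' with rfl | hJ's
        · exact Or.inr hgt
        · exact hJ J' hJ's


/-- Under i.i.d. sampling and the feasibility assumption
`μ_τ({1,…,k}) > 1−α`, the probability that Algorithm 1 fails to return a parameter
set (`J^{(n)} = NA`, i.e. no subset covers a `(1−α)` fraction of the calibration
samples) tends to zero. -/
theorem algorithm1_NA_prob_tendsto_zero
    (hk : 1 ≤ k) {Ω : Type*} [MeasurableSpace Ω]
    (Pr : Measure Ω) [IsProbabilityMeasure Pr]
    (P : Measure (𝒳 × Mask W H)) [IsProbabilityMeasure P]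
    (f : 𝒳 → Fin k → Mask W H) (hf : ∀ j, Measurable (fun x => f x j))
    (α τ : ℝ) (hα : α ∈ Set.Ioo (0:ℝ) 1) (hτ : τ ∈ Set.Ioo (0:ℝ) 1)
    (Z : ℕ → Ω → 𝒳 × Mask W H) (hZmeas : ∀ i, Measurable (Z i))
    (hindep : iIndepFun Z Pr)
    (hlaw : ∀ i, Measure.map (Z i) Pr = P)
    (hfeas : ENNReal.ofReal (1 - α) < muTau P f τ (Finset.univ : Finset (Fin k)))
    (lt : Finset (Fin k) → Finset (Fin k) → Prop)
    (hlto : IsStrictTotalOrder (Finset (Fin k)) lt)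
    (hltcard : ∀ J J' : Finset (Fin k), J.card < J'.card → lt J J')
    (Jn : ℕ → Ω → Option (Finset (Fin k)))
    (hJn : ∀ (n : ℕ) (ω : Ω) (J : Finset (Fin k)), Jn n ω = some J ↔
      (Covers Z f α τ n ω J ∧
        ∀ J' : Finset (Fin k), Covers Z f α τ n ω J' → J = J' ∨ lt J J')) :
    Tendsto (fun n : ℕ => Pr {ω | Jn n ω = none}) atTop (nhds 0) := by
  classical
  -- The event set whose probability is `μ_τ(univ)`.
  set S : Set (𝒳 × Mask W H) :=
    {p | ∃ j ∈ (Finset.univ : Finset (Fin k)), τ < IoU p.2 (f p.1 j)} with hS_def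
  have hSmeas : MeasurableSet S := by
    have hrw : S = ⋃ j ∈ (Finset.univ : Finset (Fin k)),
        {p : 𝒳 × Mask W H | τ < IoU p.2 (f p.1 j)} := by
      ext p; simp [hS_def]
    rw [hrw]
    refine MeasurableSet.biUnion (Set.to_countable _) (fun j _ => ?_)
    have h1 : Measurable (fun q : Mask W H × Mask W H => IoU q.1 q.2) :=
      measurable_of_countable _
    have hmeas : Measurable (fun p : 𝒳 × Mask W H => IoU p.2 (f p.1 j)) :=
      h1.comp (measurable_snd.prodMk ((hf j).comp measurable_fst))
    exact measurableSet_lt measurable_const hmeas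
  set g : (𝒳 × Mask W H) → ℝ := S.indicator (fun _ => (1:ℝ)) with hg_def
  have hg : Measurable g := measurable_const.indicator hSmeas
  set X : ℕ → Ω → ℝ := fun i ω => g (Z (i+1) ω) with hX_def
  have hXmeas : ∀ i, Measurable (X i) := fun i => hg.comp (hZmeas (i+1))
  have hmap : ∀ m, Measure.map (X m) Pr = Measure.map g P := by
    intro m
    have : X m = g ∘ Z (m+1) := rfl
    rw [this, ← Measure.map_map hg (hZmeas (m+1)), hlaw (m+1)]
  have hident : ∀ i, ProbabilityTheory.IdentDistrib (X i) (X 0) Pr Pr := fun i =>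
    ⟨(hXmeas i).aemeasurable, (hXmeas 0).aemeasurable, by rw [hmap i, hmap 0]⟩
  have hindep' : Pairwise (Function.onFun (ProbabilityTheory.IndepFun · · Pr) X) := by
    intro i j hij
    exact (hindep.indepFun (show i+1 ≠ j+1 by omega)).comp hg hg
  have hX0 : X 0 = (Z 1 ⁻¹' S).indicator (fun _ => (1:ℝ)) := by
    ext ω
    simp [hX_def, hg_def, Set.indicator_apply, Set.mem_preimage]
  have hint : Integrable (X 0) Pr := by
    rw [hX0]
    exact (integrable_const (1:ℝ)).indicator ((hZmeas 1) hSmeas)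
  set μR : ℝ := (P S).toReal with hμR_def
  have hPrZ : Pr (Z 1 ⁻¹' S) = P S := by
    rw [← hlaw 1, Measure.map_apply (hZmeas 1) hSmeas]
  have hE : ∫ ω, X 0 ω ∂Pr = μR := by
    rw [hX0, MeasureTheory.integral_indicator_const (1:ℝ) ((hZmeas 1) hSmeas), measureReal_def, hPrZ]
    simp [hμR_def]
  have hμα : 1 - α < μR := by
    have hfeas' : ENNReal.ofReal (1 - α) < P S := hfeas
    exact (ENNReal.ofReal_lt_iff_lt_toReal (by linarith [hα.2]) (measure_ne_top P S)).mp hfeas'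
  set ε : ℝ := μR - (1 - α) with hε_def
  have hε : 0 < ε := by simp [hε_def]; linarith
  have hae := ProbabilityTheory.strong_law_ae_real X hint hindep' hident
  rw [show Pr[X 0] = μR from hE] at hae
  set fn : ℕ → Ω → ℝ := fun n ω => (∑ i ∈ Finset.range n, X i ω) / n with hfn_def
  have hfn_meas : ∀ n, AEStronglyMeasurable (fn n) Pr := fun n =>
    ((Finset.measurable_sum _ (fun i _ => hXmeas i)).div_const _).aestronglyMeasurable
  have htim : MeasureTheory.TendstoInMeasure Pr fn atTop (fun _ => μR) :=
    tendstoInMeasure_of_tendsto_ae hfn_meas hae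
  have hkey := htim (ENNReal.ofReal ε) (ENNReal.ofReal_pos.2 hε)
  refine tendsto_of_tendsto_of_tendsto_of_le_of_le' tendsto_const_nhds hkey
    (Eventually.of_forall (fun n => zero_le)) ?_
  filter_upwards [eventually_ge_atTop 1] with n hn
  refine measure_mono (fun ω hω => ?_)
  have hω' : Jn n ω = none := hω
  -- `univ` does not cover
  have hnc : ¬ Covers Z f α τ n ω Finset.univ := by
    intro hcov
    set s : Finset (Finset (Fin k)) :=
      Finset.univ.filter (fun J => Covers Z f α τ n ω J) with hs_def
    have hsne : s.Nonempty := ⟨Finset.univ, by simp [hs_def, hcov]⟩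
    obtain ⟨J₀, hJ₀s, hleast⟩ := exists_lt_least lt hlto s hsne
    have h1 : Covers Z f α τ n ω J₀ := (Finset.mem_filter.1 hJ₀s).2
    have h2 : Jn n ω = some J₀ := (hJn n ω J₀).2
      ⟨h1, fun J' hJ' => hleast J' (Finset.mem_filter.2 ⟨Finset.mem_univ _, hJ'⟩)⟩
    rw [hω'] at h2
    cases h2
  set c : ℝ := (((Finset.Icc 1 n).filter
    (fun i => ∃ j ∈ (Finset.univ : Finset (Fin k)),
      τ < IoU (Z i ω).2 (f (Z i ω).1 j))).card : ℝ) with hc_def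
  have hclt : c < (1 - α) * n := not_le.mp hnc
  have hsum : ∑ i ∈ Finset.range n, X i ω = c := by
    have hcs : c = ∑ i ∈ Finset.Icc 1 n,
        (if (∃ j ∈ (Finset.univ : Finset (Fin k)),
          τ < IoU (Z i ω).2 (f (Z i ω).1 j)) then (1:ℝ) else 0) := by
      rw [Finset.sum_boole, hc_def]
    rw [hcs, ← Finset.Ico_add_one_right_eq_Icc, Finset.sum_Ico_eq_sum_range]
    simp only [Nat.add_sub_cancel]
    refine Finset.sum_congr rfl (fun i _ => ?_)
    have : X i ω = if (Z (i+1) ω) ∈ S then (1:ℝ) else 0 := by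
      simp [hX_def, hg_def, Set.indicator_apply]
    rw [this, add_comm 1 i]
    simp [hS_def, Set.mem_setOf_eq]
  have hnpos : (0:ℝ) < n := by
    have : (1:ℕ) ≤ n := hn
    exact_mod_cast Nat.lt_of_lt_of_le Nat.zero_lt_one this
  have hfnlt : fn n ω < 1 - α := by
    rw [hfn_def]
    simp only
    rw [hsum, div_lt_iff₀ hnpos]
    linarith
  show ENNReal.ofReal ε ≤ edist (fn n ω) μR
  rw [edist_dist]
  refine ENNReal.ofReal_le_ofReal ?_
  rw [Real.dist_eq]
  calc ε = μR - (1 - α) := rfl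
    _ ≤ μR - fn n ω := by linarith
    _ ≤ |μR - fn n ω| := le_abs_self _
    _ = |fn n ω - μR| := abs_sub_comm _ _
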